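/- Let X be a metric space and (P_t)_{t≥0} a Feller Markov semigroup of transition kernels on X. Let (ρ_s)_{s∈ℝ} be an entrance measure for the semigroup, i.e., P_t^*ρ_s = ρ_{t+s} for all t ≥ 0 and s ∈ ℝ, which is quasi-periodic with periods τ₁, τ₂ whose reciprocals are rationally linearly independent: there is a weakly continuous ρ̃ : ℝ² → Prob(X) with ρ̃_{t,t} = ρ_t, ρ̃_{t+τ₁,s} = ρ̃_{t,s} and ρ̃_{t,s+τ₂} = ρ̃_{t,s}. If the family {ρ̄_T := (1/T)∫_0^T ρ_s ds : T > 0} is tight, then ν := (1/(τ₁τ₂))∫_0^{τ₁}∫_0^{τ₂} ρ̃_{s₁,s₂} ds₁ ds₂ is an invariant probability measure: P_t^*ν = ν for all t ≥ 0. -/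

import Mathlib

open MeasureTheory Set Filter
open scoped ENNReal NNReal

-- Lemma 1: periodic shift
lemma aux_lintegral_shift {τ : ℝ} (hτ : 0 < τ) (t : ℝ) {F : ℝ → ℝ≥0∞}
    (hF : Measurable F) (hper : Function.Periodic F τ) :
    ∫⁻ s in Ioc (0:ℝ) τ, F (t + s) = ∫⁻ s in Ioc (0:ℝ) τ, F s := by
  have hpre : (fun s => t + s) ⁻¹' Ioc t (t + τ) = Ioc (0:ℝ) τ := by
    ext x; simp [add_le_add_iff_left]
  have h1 : ∫⁻ u in Ioc t (t + τ), F u = ∫⁻ s in Ioc (0:ℝ) τ, F (t + s) := by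
    conv_lhs => rw [← Measure.IsAddLeftInvariant.map_add_left_eq_self (μ := (volume : Measure ℝ)) t]
    rw [setLIntegral_map measurableSet_Ioc hF (measurable_const_add t), hpre]
  rw [← h1]
  have h2 := (isAddFundamentalDomain_Ioc hτ t).setLIntegral_eq
    (isAddFundamentalDomain_Ioc hτ 0) F ?_
  · simpa using h2
  · rintro ⟨g, hg⟩ x
    obtain ⟨k, rfl⟩ := (AddSubgroup.mem_zmultiples_iff).mp hg
    simpa [add_comm] using (hper.zsmul k) x

-- Lemma 2: density of the diagonal orbit
lemma aux_dense_orbit {τ₁ τ₂ : ℝ} (hτ₁ : 0 < τ₁) (hτ₂ : 0 < τ₂)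
    (hindep : ∀ k₁ k₂ : ℤ, ¬(k₁ = 0 ∧ k₂ = 0) → (k₁ : ℝ) / τ₁ + (k₂ : ℝ) / τ₂ ≠ 0) :
    Dense {q : ℝ × ℝ | ∃ (s : ℝ) (k₁ k₂ : ℤ), q = (s + k₁ • τ₁, s + k₂ • τ₂)} := by
  set S : AddSubgroup ℝ := AddSubgroup.zmultiples τ₁ ⊔ AddSubgroup.zmultiples τ₂ with hS
  have hSdense : Dense (S : Set ℝ) := by
    rcases AddSubgroup.dense_or_cyclic S with h | ⟨a, ha⟩
    · exact h
    · exfalso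
      have h₁ : τ₁ ∈ S := AddSubgroup.mem_sup_left (AddSubgroup.mem_zmultiples τ₁)
      have h₂ : τ₂ ∈ S := AddSubgroup.mem_sup_right (AddSubgroup.mem_zmultiples τ₂)
      rw [ha] at h₁ h₂
      obtain ⟨m, hm⟩ := AddSubgroup.mem_closure_singleton.mp h₁
      obtain ⟨n, hn⟩ := AddSubgroup.mem_closure_singleton.mp h₂
      rw [zsmul_eq_mul] at hm hn
      have hm0 : (m : ℝ) ≠ 0 := by
        rintro h; rw [h, zero_mul] at hm; exact hτ₁.ne' hm.symm
      have hmz : m ≠ 0 := fun h => hm0 (by exact_mod_cast congrArg (Int.cast : ℤ → ℝ) h)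
      have key := hindep (-m) n (fun h => hmz (neg_eq_zero.mp h.1))
      apply key
      have hrel : (n : ℝ) * τ₁ = (m : ℝ) * τ₂ := by rw [← hm, ← hn]; ring
      push_cast
      field_simp
      linarith [hrel]
  rw [Metric.dense_iff]
  rintro ⟨a, b⟩ r hr
  obtain ⟨g, hgS, hgd⟩ := Metric.mem_closure_iff.mp (hSdense (a - b)) r hr
  obtain ⟨y, hy, z, hz, rfl⟩ := AddSubgroup.mem_sup.mp hgS
  obtain ⟨k₁, rfl⟩ := AddSubgroup.mem_zmultiples_iff.mp hy
  obtain ⟨k₂, rfl⟩ := AddSubgroup.mem_zmultiples_iff.mp hz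
  refine ⟨(b + k₂ • τ₂ + k₁ • τ₁, b), ?_, ⟨b + k₂ • τ₂, k₁, -k₂, by simp⟩⟩
  rw [Metric.mem_ball, Prod.dist_eq]
  simp only [dist_self]
  rw [max_lt_iff]
  refine ⟨?_, hr⟩
  rw [Real.dist_eq] at hgd ⊢
  have : b + k₂ • τ₂ + k₁ • τ₁ - a = -(a - b - (k₁ • τ₁ + k₂ • τ₂)) := by ring
  rw [this, abs_neg]
  exact hgd

-- Lemma 3: measurability of q ↦ μ q Γ for weakly continuous families
lemma aux_measurable_apply {X : Type*} [MetricSpace X] [MeasurableSpace X] [BorelSpace X]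
    {α : Type*} [TopologicalSpace α] [MeasurableSpace α] [OpensMeasurableSpace α]
    (μ : α → ProbabilityMeasure X) (hμ : Continuous μ) :
    ∀ ⦃Γ : Set X⦄, MeasurableSet Γ → Measurable fun q => (μ q : Measure X) Γ := by
  have hcont : ∀ f : BoundedContinuousFunction X ℝ≥0,
      Continuous fun q => ∫⁻ x, (f x : ℝ≥0∞) ∂(μ q : Measure X) := by
    intro f
    rw [continuous_iff_continuousAt]
    intro q₀
    exact ProbabilityMeasure.tendsto_iff_forall_lintegral_tendsto.mp (hμ.tendsto q₀) f
  have hborel : (inferInstance : MeasurableSpace X) = .generateFrom {F : Set X | IsClosed F} := by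
    rw [BorelSpace.measurable_eq (α := X), borel_eq_generateFrom_isClosed]
  refine MeasurableSpace.induction_on_inter hborel isPiSystem_isClosed ?_ ?_ ?_ ?_
  · simp only [measure_empty]; exact measurable_const
  · intro F hF
    have hFc : IsClosed F := hF
    apply ENNReal.measurable_of_tendsto (f := fun n q => ∫⁻ x, (hFc.apprSeq n x : ℝ≥0∞) ∂(μ q : Measure X))
    · exact fun n => (hcont (hFc.apprSeq n)).measurable
    · rw [tendsto_pi_nhds]
      intro q
      exact HasOuterApproxClosed.tendsto_lintegral_apprSeq hFc (μ q : Measure X)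
  · intro t ht hmt
    have : (fun q => (μ q : Measure X) tᶜ) = fun q => 1 - (μ q : Measure X) t := by
      funext q; exact prob_compl_eq_one_sub ht
    rw [this]
    exact Measurable.const_sub hmt 1
  · intro f hdisj hmeas hm
    have : (fun q => (μ q : Measure X) (⋃ i, f i)) = fun q => ∑' i, (μ q : Measure X) (f i) := by
      funext q; exact measure_iUnion hdisj hmeas
    rw [this]
    exact Measurable.ennreal_tsum hm

-- Lemma 4: the key intertwining identity, extended off the diagonal by density
lemma aux_key {X : Type*} [MetricSpace X] [MeasurableSpace X] [BorelSpace X]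
    (κ : ℝ → X → Measure X)
    (hκ_prob : ∀ t : ℝ, 0 ≤ t → ∀ x, IsProbabilityMeasure (κ t x))
    (hκ_meas : ∀ t : ℝ, 0 ≤ t → ∀ Γ : Set X, MeasurableSet Γ → Measurable fun x => κ t x Γ)
    (hFeller : ∀ t : ℝ, 0 ≤ t → ∀ f : BoundedContinuousFunction X ℝ,
      ∃ g : BoundedContinuousFunction X ℝ, ∀ x, g x = ∫ y, f y ∂(κ t x))
    (ρ : ℝ → Measure X) (hρ_prob : ∀ s, IsProbabilityMeasure (ρ s))
    (hentrance : ∀ t : ℝ, 0 ≤ t → ∀ s : ℝ, ∀ Γ : Set X, MeasurableSet Γ →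
      ∫⁻ x, κ t x Γ ∂(ρ s) = ρ (t + s) Γ)
    (τ₁ τ₂ : ℝ) (hτ₁ : 0 < τ₁) (hτ₂ : 0 < τ₂)
    (hindep : ∀ k₁ k₂ : ℤ, ¬(k₁ = 0 ∧ k₂ = 0) → (k₁ : ℝ) / τ₁ + (k₂ : ℝ) / τ₂ ≠ 0)
    (ρt : ℝ → ℝ → ProbabilityMeasure X)
    (hρt_cont : Continuous fun q : ℝ × ℝ => ρt q.1 q.2)
    (hdiag : ∀ t : ℝ, (ρt t t : Measure X) = ρ t)
    (hper₁ : ∀ t s : ℝ, ρt (t + τ₁) s = ρt t s)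
    (hper₂ : ∀ t s : ℝ, ρt t (s + τ₂) = ρt t s)
    (t : ℝ) (ht : 0 ≤ t) (s₁ s₂ : ℝ) :
    Measure.bind (ρt s₁ s₂ : Measure X) (κ t) = (ρt (t + s₁) (t + s₂) : Measure X) := by
  -- measurability of the kernel
  have hκm : Measurable (κ t) :=
    Measure.measurable_of_measurable_coe _ (fun Γ hΓ => hκ_meas t ht Γ hΓ)
  -- integer periodicity
  have hZ₁ : ∀ (k : ℤ) (x y : ℝ), ρt (x + k • τ₁) y = ρt x y := by
    intro k
    induction k using Int.induction_on with
    | zero => simp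
    | succ n ih =>
      intro x y
      have e : x + ((n : ℤ) + 1) • τ₁ = (x + (n : ℤ) • τ₁) + τ₁ := by simp only [zsmul_eq_mul]; push_cast; ring
      rw [e, hper₁, ih]
    | pred n ih =>
      intro x y
      have e : (x + (-(n : ℤ) - 1) • τ₁) + τ₁ = x + (-(n : ℤ)) • τ₁ := by simp only [zsmul_eq_mul]; push_cast; ring
      calc ρt (x + (-(n : ℤ) - 1) • τ₁) y
          = ρt ((x + (-(n : ℤ) - 1) • τ₁) + τ₁) y := (hper₁ _ _).symm
        _ = ρt (x + (-(n : ℤ)) • τ₁) y := by rw [e]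
        _ = ρt x y := ih x y
  have hZ₂ : ∀ (k : ℤ) (x y : ℝ), ρt x (y + k • τ₂) = ρt x y := by
    intro k
    induction k using Int.induction_on with
    | zero => simp
    | succ n ih =>
      intro x y
      have e : y + ((n : ℤ) + 1) • τ₂ = (y + (n : ℤ) • τ₂) + τ₂ := by simp only [zsmul_eq_mul]; push_cast; ring
      rw [e, hper₂, ih]
    | pred n ih =>
      intro x y
      have e : (y + (-(n : ℤ) - 1) • τ₂) + τ₂ = y + (-(n : ℤ)) • τ₂ := by simp only [zsmul_eq_mul]; push_cast; ring
      calc ρt x (y + (-(n : ℤ) - 1) • τ₂)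
          = ρt x ((y + (-(n : ℤ) - 1) • τ₂) + τ₂) := (hper₂ _ _).symm
        _ = ρt x (y + (-(n : ℤ)) • τ₂) := by rw [e]
        _ = ρt x y := ih x y
  -- the entrance identity as a bind equation
  have hbindρ : ∀ s : ℝ, Measure.bind (ρ s) (κ t) = ρ (t + s) := by
    intro s
    refine Measure.ext fun Γ hΓ => ?_
    rw [Measure.bind_apply hΓ hκm.aemeasurable]
    exact hentrance t ht s Γ hΓ
  have hD := aux_dense_orbit hτ₁ hτ₂ hindep
  haveI hbp : IsProbabilityMeasure (Measure.bind (ρt s₁ s₂ : Measure X) (κ t)) := by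
    constructor
    rw [Measure.bind_apply MeasurableSet.univ hκm.aemeasurable,
      lintegral_congr (fun x => (hκ_prob t ht x).measure_univ), lintegral_one, measure_univ]
  refine ext_of_forall_lintegral_eq_of_IsFiniteMeasure fun f => ?_
  -- the real-valued version of f
  let fℝ : BoundedContinuousFunction X ℝ :=
    ⟨⟨fun x => (f x : ℝ), NNReal.continuous_coe.comp f.continuous⟩, by
      obtain ⟨C, hC⟩ := f.bounded
      exact ⟨C, fun x y => by simpa [NNReal.dist_eq, Real.dist_eq] using hC x y⟩⟩
  obtain ⟨g, hg⟩ := hFeller t ht fℝ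
  -- the Feller transform of f, as an ℝ≥0-valued function
  set h : BoundedContinuousFunction X ℝ≥0 := g.nnrealPart with hh
  have hquant : ∀ x : X, ∫⁻ y, (f y : ℝ≥0∞) ∂(κ t x) = (h x : ℝ≥0∞) := by
    intro x
    haveI := hκ_prob t ht x
    have hint : Integrable (fun y => (f y : ℝ)) (κ t x) := fℝ.integrable _
    rw [lintegral_coe_eq_integral f hint]
    have : ∫ y, (f y : ℝ) ∂(κ t x) = g x := (hg x).symm
    rw [this]
    simp [hh, ENNReal.ofReal]
  -- the two functions to compare
  set A : ℝ × ℝ → ℝ≥0∞ := fun q => ∫⁻ x, (h x : ℝ≥0∞) ∂(ρt q.1 q.2 : Measure X) with hA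
  set B : ℝ × ℝ → ℝ≥0∞ := fun q => ∫⁻ x, (f x : ℝ≥0∞) ∂(ρt (t + q.1) (t + q.2) : Measure X)
    with hB
  have hAc : Continuous A := by
    rw [continuous_iff_continuousAt]
    intro q₀
    exact ProbabilityMeasure.tendsto_iff_forall_lintegral_tendsto.mp (hρt_cont.tendsto q₀) h
  have hBc : Continuous B := by
    rw [continuous_iff_continuousAt]
    intro q₀
    have hshift : Continuous fun q : ℝ × ℝ => ρt (t + q.1) (t + q.2) := by
      have : Continuous fun q : ℝ × ℝ => ((t + q.1, t + q.2) : ℝ × ℝ) := by fun_prop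
      exact hρt_cont.comp this
    exact ProbabilityMeasure.tendsto_iff_forall_lintegral_tendsto.mp (hshift.tendsto q₀) f
  -- agreement on the dense orbit
  have hEq : EqOn A B {q : ℝ × ℝ | ∃ (s : ℝ) (k₁ k₂ : ℤ), q = (s + k₁ • τ₁, s + k₂ • τ₂)} := by
    rintro q ⟨s, k₁, k₂, rfl⟩
    have hA' : A (s + k₁ • τ₁, s + k₂ • τ₂) = ∫⁻ x, (h x : ℝ≥0∞) ∂(ρ s) := by
      simp only [hA]
      rw [hZ₁ k₁ s (s + k₂ • τ₂), hZ₂ k₂ s s, hdiag]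
    have hB' : B (s + k₁ • τ₁, s + k₂ • τ₂) = ∫⁻ x, (f x : ℝ≥0∞) ∂(ρ (t + s)) := by
      simp only [hB]
      have e₁ : t + (s + k₁ • τ₁) = (t + s) + k₁ • τ₁ := by ring
      have e₂ : t + (s + k₂ • τ₂) = (t + s) + k₂ • τ₂ := by ring
      rw [e₁, e₂, hZ₁ k₁ (t + s) ((t + s) + k₂ • τ₂), hZ₂ k₂ (t + s) (t + s), hdiag]
    rw [hA', hB', ← hbindρ s,
      Measure.lintegral_bind hκm.aemeasurable f.measurable_coe_ennreal_comp.aemeasurable]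
    exact lintegral_congr fun x => (hquant x).symm
  have hAB : A = B := hAc.ext_on hD hBc hEq
  -- conclude
  have h1 : ∫⁻ x, (f x : ℝ≥0∞) ∂(Measure.bind (ρt s₁ s₂ : Measure X) (κ t)) = A (s₁, s₂) := by
    rw [Measure.lintegral_bind hκm.aemeasurable f.measurable_coe_ennreal_comp.aemeasurable]
    exact lintegral_congr fun x => hquant x
  rw [h1, hAB]

/-- **Theorem 3.15.**  Let `(P_t)` be a Feller Markov semigroup on a metric space `X` and
`(ρ_s)` an entrance measure which is quasi-periodic with periods `τ₁, τ₂` whose reciprocals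
are rationally linearly independent (witnessed by a weakly continuous `ρ̃` with
`ρ̃_{t,t} = ρ_t` and the two periodicities).  If the Cesàro averages
`ρ̄_T = (1/T)∫_0^T ρ_s ds` are tight, then
`ν = (1/(τ₁τ₂))∫_0^{τ₁}∫_0^{τ₂} ρ̃_{s₁,s₂} ds₁ ds₂` is an invariant probability
measure: `P_t^* ν = ν` for all `t ≥ 0`. -/
theorem quasiPeriodic_measure_average_invariant
    {X : Type*} [MetricSpace X] [MeasurableSpace X] [BorelSpace X]
    -- the Markov semigroup (P_t)_{t ≥ 0}
    (κ : ℝ → X → Measure X)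
    (hκ_prob : ∀ t : ℝ, 0 ≤ t → ∀ x, IsProbabilityMeasure (κ t x))
    (hκ_meas : ∀ t : ℝ, 0 ≤ t → ∀ Γ : Set X, MeasurableSet Γ → Measurable fun x => κ t x Γ)
    (hκ_zero : ∀ x, κ 0 x = Measure.dirac x)
    (hκ_CK : ∀ t s : ℝ, 0 ≤ t → 0 ≤ s → ∀ x, ∀ Γ : Set X, MeasurableSet Γ →
      κ (t + s) x Γ = ∫⁻ y, κ t y Γ ∂(κ s x))
    -- Feller property
    (hFeller : ∀ t : ℝ, 0 ≤ t → ∀ f : BoundedContinuousFunction X ℝ,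
      ∃ g : BoundedContinuousFunction X ℝ, ∀ x, g x = ∫ y, f y ∂(κ t x))
    -- the entrance measure (ρ_s)
    (ρ : ℝ → Measure X) (hρ_prob : ∀ s, IsProbabilityMeasure (ρ s))
    (hentrance : ∀ t : ℝ, 0 ≤ t → ∀ s : ℝ, ∀ Γ : Set X, MeasurableSet Γ →
      ∫⁻ x, κ t x Γ ∂(ρ s) = ρ (t + s) Γ)
    -- quasi-periodicity with rationally independent reciprocals of the periods
    (τ₁ τ₂ : ℝ) (hτ₁ : 0 < τ₁) (hτ₂ : 0 < τ₂)
    (hindep : ∀ k₁ k₂ : ℤ, ¬(k₁ = 0 ∧ k₂ = 0) → (k₁ : ℝ) / τ₁ + (k₂ : ℝ) / τ₂ ≠ 0)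
    (ρt : ℝ → ℝ → ProbabilityMeasure X)
    (hρt_cont : Continuous fun q : ℝ × ℝ => ρt q.1 q.2)
    (hdiag : ∀ t : ℝ, (ρt t t : Measure X) = ρ t)
    (hper₁ : ∀ t s : ℝ, ρt (t + τ₁) s = ρt t s)
    (hper₂ : ∀ t s : ℝ, ρt t (s + τ₂) = ρt t s)
    -- tightness of the Cesàro averages ρ̄_T
    (htight : ∀ ε : ENNReal, 0 < ε → ∃ K : Set X, IsCompact K ∧
      ∀ T : ℝ, 0 < T → 1 - ε < (ENNReal.ofReal T)⁻¹ * ∫⁻ s in Ioc (0 : ℝ) T, ρ s K) :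
    -- the double average ν (defined setwise) is an invariant probability measure
    ∀ ν : Measure X,
      (∀ Γ : Set X, MeasurableSet Γ →
        ν Γ = (ENNReal.ofReal (τ₁ * τ₂))⁻¹ *
          ∫⁻ s₁ in Ioc (0 : ℝ) τ₁, ∫⁻ s₂ in Ioc (0 : ℝ) τ₂, (ρt s₁ s₂ : Measure X) Γ) →
      IsProbabilityMeasure ν ∧
      ∀ t : ℝ, 0 ≤ t → ∀ Γ : Set X, MeasurableSet Γ →
        ∫⁻ x, κ t x Γ ∂ν = ν Γ := by
  intro ν hν
  have hρtapp : ∀ ⦃Γ : Set X⦄, MeasurableSet Γ →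
      Measurable fun q : ℝ × ℝ => (ρt q.1 q.2 : Measure X) Γ :=
    aux_measurable_apply (fun q : ℝ × ℝ => ρt q.1 q.2) hρt_cont
  set K : ℝ × ℝ → Measure X := fun q => (ρt q.1 q.2 : Measure X) with hK
  have hKm : Measurable K :=
    Measure.measurable_of_measurable_coe _ (fun Γ hΓ => hρtapp hΓ)
  set μ₂ : Measure (ℝ × ℝ) :=
    (volume.restrict (Ioc (0:ℝ) τ₁)).prod (volume.restrict (Ioc (0:ℝ) τ₂)) with hμ₂
  set c : ℝ≥0∞ := (ENNReal.ofReal (τ₁ * τ₂))⁻¹ with hc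
  have hiter : ∀ Γ : Set X, MeasurableSet Γ → Measure.bind μ₂ K Γ =
      ∫⁻ s₁ in Ioc (0:ℝ) τ₁, ∫⁻ s₂ in Ioc (0:ℝ) τ₂, (ρt s₁ s₂ : Measure X) Γ := by
    intro Γ hΓ
    rw [Measure.bind_apply hΓ hKm.aemeasurable]
    exact lintegral_prod _ (hρtapp hΓ).aemeasurable
  have hν_eq : ν = c • Measure.bind μ₂ K := by
    refine Measure.ext fun Γ hΓ => ?_
    rw [hν Γ hΓ, Measure.smul_apply, smul_eq_mul, hiter Γ hΓ]
  have hprob : IsProbabilityMeasure ν := by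
    constructor
    rw [hν univ MeasurableSet.univ]
    have h1 : ∫⁻ s₁ in Ioc (0:ℝ) τ₁, ∫⁻ s₂ in Ioc (0:ℝ) τ₂, (ρt s₁ s₂ : Measure X) univ
        = ENNReal.ofReal τ₂ * ENNReal.ofReal τ₁ := by
      have h2 : ∀ s₁ : ℝ, ∫⁻ s₂ in Ioc (0:ℝ) τ₂, (ρt s₁ s₂ : Measure X) univ
          = ENNReal.ofReal τ₂ := by
        intro s₁
        simp [measure_univ, Real.volume_Ioc]
      rw [lintegral_congr h2]
      simp [Real.volume_Ioc]
    rw [h1]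
    have h3 : ENNReal.ofReal τ₂ * ENNReal.ofReal τ₁ = ENNReal.ofReal (τ₁ * τ₂) := by
      rw [← ENNReal.ofReal_mul hτ₂.le, mul_comm]
    rw [h3]
    exact ENNReal.inv_mul_cancel
      (ENNReal.ofReal_pos.mpr (mul_pos hτ₁ hτ₂)).ne' ENNReal.ofReal_ne_top
  refine ⟨hprob, ?_⟩
  intro t ht Γ hΓ
  have hκm : Measurable (κ t) :=
    Measure.measurable_of_measurable_coe _ (fun Γ' hΓ' => hκ_meas t ht Γ' hΓ')
  have key := aux_key κ hκ_prob hκ_meas hFeller ρ hρ_prob hentrance τ₁ τ₂ hτ₁ hτ₂ hindep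
    ρt hρt_cont hdiag hper₁ hper₂ t ht
  have hshiftm : Measurable fun q : ℝ × ℝ => ((t + q.1, t + q.2) : ℝ × ℝ) := by fun_prop
  calc ∫⁻ x, κ t x Γ ∂ν
      = c * ∫⁻ x, κ t x Γ ∂(Measure.bind μ₂ K) := by
        rw [hν_eq, lintegral_smul_measure, smul_eq_mul]
    _ = c * ∫⁻ q, ∫⁻ x, κ t x Γ ∂(K q) ∂μ₂ := by
        rw [Measure.lintegral_bind hKm.aemeasurable (hκ_meas t ht Γ hΓ).aemeasurable]
    _ = c * ∫⁻ q, (ρt (t + q.1) (t + q.2) : Measure X) Γ ∂μ₂ := by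
        congr 1
        refine lintegral_congr fun q => ?_
        rw [← Measure.bind_apply hΓ hκm.aemeasurable, key q.1 q.2]
    _ = c * ∫⁻ s₁ in Ioc (0:ℝ) τ₁, ∫⁻ s₂ in Ioc (0:ℝ) τ₂,
          (ρt (t + s₁) (t + s₂) : Measure X) Γ := by
        congr 1
        exact lintegral_prod _ (((hρtapp hΓ).comp hshiftm).aemeasurable)
    _ = c * ∫⁻ s₁ in Ioc (0:ℝ) τ₁, ∫⁻ s₂ in Ioc (0:ℝ) τ₂,
          (ρt (t + s₁) s₂ : Measure X) Γ := by
        congr 1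
        refine lintegral_congr fun s₁ => ?_
        refine aux_lintegral_shift (F := fun s₂ => (ρt (t + s₁) s₂ : Measure X) Γ) hτ₂ t ?_ ?_
        · exact (hρtapp hΓ).comp (by fun_prop : Measurable fun s₂ : ℝ => ((t + s₁, s₂) : ℝ × ℝ))
        · intro s₂
          exact congrArg (fun m : ProbabilityMeasure X => (m : Measure X) Γ) (hper₂ (t + s₁) s₂)
    _ = c * ∫⁻ s₁ in Ioc (0:ℝ) τ₁, ∫⁻ s₂ in Ioc (0:ℝ) τ₂,
          (ρt s₁ s₂ : Measure X) Γ := by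
        congr 1
        refine aux_lintegral_shift (F := fun s₁ => ∫⁻ s₂ in Ioc (0:ℝ) τ₂, (ρt s₁ s₂ : Measure X) Γ) hτ₁ t ?_ ?_
        · exact Measurable.lintegral_prod_right' (f := fun q : ℝ × ℝ =>
            (ρt q.1 q.2 : Measure X) Γ) (hρtapp hΓ)
        · intro s₁
          refine lintegral_congr fun s₂ => ?_
          exact congrArg (fun m : ProbabilityMeasure X => (m : Measure X) Γ) (hper₁ s₁ s₂)
    _ = ν Γ := (hν Γ hΓ).symm
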